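/- Let f: ℝ^{m×n} → ℝ be L-smooth in Frobenius norm, β ∈ (0,1), p ∈ (0,1), and consider deterministic iterates W_{t+1} = W_t − η_t ρ(M_t) with step sizes η_t ≤ η, where ρ(M) = U Σ^p V^T for the SVD of M and all singular values of every M_t are at most l. Define C_0 = ∇f(W_0), C_t = β C_{t−1} + (1−β) ∇f(W_t). Then ‖∇f(W_t) − C_t‖_F ≤ √r · l^p · β L η / (1 − β), where r = min(m,n). -/
import Mathlib


open Matrix

/-- `IsSVD M U σ V` asserts that `M = U · diag σ · Vᵀ` is a (thin) singular value
decomposition of `M`. -/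
def IsSVD {m n r : ℕ} (M : Matrix (Fin m) (Fin n) ℝ)
    (U : Matrix (Fin m) (Fin r) ℝ) (σ : Fin r → ℝ) (V : Matrix (Fin n) (Fin r) ℝ) : Prop :=
  Uᵀ * U = 1 ∧ Vᵀ * V = 1 ∧ (∀ i, 0 ≤ σ i) ∧ Antitone σ ∧ M = U * Matrix.diagonal σ * Vᵀ

/-- Squared Frobenius norm, `‖A‖_F² = ∑_{i,j} A_{ij}²`. -/
noncomputable def frobSq {m n : ℕ} (A : Matrix (Fin m) (Fin n) ℝ) : ℝ :=
  ∑ i, ∑ j, (A i j) ^ (2 : ℕ)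

/-- Frobenius norm. -/
noncomputable def fnorm {m n : ℕ} (A : Matrix (Fin m) (Fin n) ℝ) : ℝ :=
  Real.sqrt (frobSq A)

attribute [local instance] Matrix.frobeniusNormedAddCommGroup Matrix.frobeniusNormedSpace

lemma fnorm_eq_norm {m n : ℕ} (A : Matrix (Fin m) (Fin n) ℝ) : fnorm A = ‖A‖ := by
  rw [Matrix.frobenius_norm_def, fnorm, frobSq, Real.sqrt_eq_rpow]
  congr 1
  · congr 1; ext i; congr 1; ext j
    rw [Real.rpow_two, Real.norm_eq_abs, sq_abs]

lemma fnorm_nonneg {m n : ℕ} (A : Matrix (Fin m) (Fin n) ℝ) : 0 ≤ fnorm A := by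
  rw [fnorm_eq_norm]; exact norm_nonneg _

lemma fnorm_triangle {m n : ℕ} (A B : Matrix (Fin m) (Fin n) ℝ) :
    fnorm (A + B) ≤ fnorm A + fnorm B := by
  simp only [fnorm_eq_norm]; exact norm_add_le _ _

lemma fnorm_smul {m n : ℕ} (c : ℝ) (A : Matrix (Fin m) (Fin n) ℝ) :
    fnorm (c • A) = |c| * fnorm A := by
  simp only [fnorm_eq_norm, norm_smul, Real.norm_eq_abs]

lemma frobSq_eq_trace {m n : ℕ} (A : Matrix (Fin m) (Fin n) ℝ) :
    frobSq A = Matrix.trace (Aᵀ * A) := by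
  simp [frobSq, Matrix.trace, Matrix.mul_apply, sq, Matrix.diag]
  rw [Finset.sum_comm]

/-- Frobenius norm bound for `U D Vᵀ` with orthonormal columns. -/
lemma fnorm_UDV {m n r : ℕ} (U : Matrix (Fin m) (Fin r) ℝ) (d : Fin r → ℝ)
    (V : Matrix (Fin n) (Fin r) ℝ) (hU : Uᵀ * U = 1) (hV : Vᵀ * V = 1)
    (c : ℝ) (hc : 0 ≤ c) (hd : ∀ i, |d i| ≤ c) :
    fnorm (U * Matrix.diagonal d * Vᵀ) ≤ Real.sqrt r * c := by
  have h1 : frobSq (U * Matrix.diagonal d * Vᵀ) = ∑ i, (d i) ^ 2 := by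
    rw [frobSq_eq_trace]
    have : (U * Matrix.diagonal d * Vᵀ)ᵀ * (U * Matrix.diagonal d * Vᵀ)
        = V * (Matrix.diagonal d * Matrix.diagonal d) * Vᵀ := by
      simp only [Matrix.transpose_mul, Matrix.transpose_transpose, Matrix.diagonal_transpose]
      simp only [Matrix.mul_assoc]
      rw [← Matrix.mul_assoc Uᵀ U, hU, Matrix.one_mul]
    rw [this, Matrix.trace_mul_comm, ← Matrix.mul_assoc, hV, Matrix.one_mul,
      Matrix.diagonal_mul_diagonal, Matrix.trace_diagonal]
    simp [sq]
  have h2 : frobSq (U * Matrix.diagonal d * Vᵀ) ≤ r * c ^ 2 := by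
    rw [h1]
    calc ∑ i, (d i) ^ 2 ≤ ∑ _i : Fin r, c ^ 2 := by
          apply Finset.sum_le_sum
          intro i _
          calc (d i)^2 = |d i|^2 := (sq_abs _).symm
            _ ≤ c ^ 2 := by
              apply sq_le_sq' <;> [linarith [abs_nonneg (d i), hd i]; exact hd i]
      _ = r * c ^ 2 := by simp [mul_comm]
  rw [fnorm]
  calc Real.sqrt (frobSq (U * Matrix.diagonal d * Vᵀ)) ≤ Real.sqrt (r * c ^ 2) :=
        Real.sqrt_le_sqrt h2
    _ = Real.sqrt r * c := by
        rw [Real.sqrt_mul (Nat.cast_nonneg r), Real.sqrt_sq hc]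

/-- **Momentum tracking error for deterministic HTMuon.** Let `∇f` be
`L`-Lipschitz in Frobenius norm, `β, p ∈ (0,1)`, iterates
`W_{t+1} = W_t − η_t ρ(M_t)` with `ρ(M) = U Σ^p Vᵀ`, `η_t ≤ η`, all singular
values of every `M_t` bounded by `l`, and `C₀ = ∇f(W₀)`,
`C_t = β C_{t−1} + (1−β) ∇f(W_t)`. Then
`‖∇f(W_t) − C_t‖_F ≤ √r · l^p · β L η / (1 − β)` with `r = min(m,n)`. -/
theorem momentum_tracking_error (m n : ℕ) (L β p η l : ℝ)
    (hL : 0 ≤ L) (hβ : β ∈ Set.Ioo (0 : ℝ) 1) (hp : p ∈ Set.Ioo (0 : ℝ) 1)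
    (hη : 0 ≤ η) (hl : 0 ≤ l)
    (gradf : Matrix (Fin m) (Fin n) ℝ → Matrix (Fin m) (Fin n) ℝ)
    (hlip : ∀ W W', fnorm (gradf W - gradf W') ≤ L * fnorm (W - W'))
    (M W C : ℕ → Matrix (Fin m) (Fin n) ℝ)
    (U : ℕ → Matrix (Fin m) (Fin (min m n)) ℝ) (σ : ℕ → Fin (min m n) → ℝ)
    (V : ℕ → Matrix (Fin n) (Fin (min m n)) ℝ)
    (hsvd : ∀ t, IsSVD (M t) (U t) (σ t) (V t))
    (hσl : ∀ t i, σ t i ≤ l)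
    (ηt : ℕ → ℝ) (hηt : ∀ t, 0 ≤ ηt t ∧ ηt t ≤ η)
    (hW : ∀ t, W (t + 1) =
      W t - ηt t • (U t * Matrix.diagonal (fun i => σ t i ^ p) * (V t)ᵀ))
    (hC0 : C 0 = gradf (W 0))
    (hCrec : ∀ t, C (t + 1) = β • C t + (1 - β) • gradf (W (t + 1))) :
    ∀ t, fnorm (gradf (W t) - C t) ≤
      Real.sqrt (min m n : ℝ) * l ^ p * β * L * η / (1 - β) := by

  obtain ⟨hβ0, hβ1⟩ := hβ
  have h1β : 0 < 1 - β := by linarith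
  have hlp : (0:ℝ) ≤ l ^ p := Real.rpow_nonneg hl p
  have hsr : (0:ℝ) ≤ Real.sqrt (min m n : ℝ) := Real.sqrt_nonneg _
  set K : ℝ := Real.sqrt (min m n : ℝ) * l ^ p * L * η with hK
  have hKnn : 0 ≤ K := by positivity
  have hBK : Real.sqrt (min m n : ℝ) * l ^ p * β * L * η / (1 - β) = β * K / (1 - β) := by
    ring
  -- step bound
  have hstep : ∀ t, fnorm (W (t+1) - W t) ≤ η * (Real.sqrt (min m n : ℝ) * l ^ p) := by
    intro t
    obtain ⟨hUU, hVV, hσ0, -, -⟩ := hsvd t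
    have hρ : fnorm (U t * Matrix.diagonal (fun i => σ t i ^ p) * (V t)ᵀ)
        ≤ Real.sqrt ((min m n : ℕ) : ℝ) * l ^ p := by
      apply fnorm_UDV _ _ _ hUU hVV _ hlp
      intro i
      rw [abs_of_nonneg (Real.rpow_nonneg (hσ0 i) p)]
      exact Real.rpow_le_rpow (hσ0 i) (hσl t i) (le_of_lt hp.1)
    rw [Nat.cast_min] at hρ
    have : W (t+1) - W t = (-(ηt t)) • (U t * Matrix.diagonal (fun i => σ t i ^ p) * (V t)ᵀ) := by
      rw [hW t]; module
    rw [this, fnorm_smul, abs_neg, abs_of_nonneg (hηt t).1]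
    exact mul_le_mul (hηt t).2 hρ (fnorm_nonneg _) hη
  intro t
  induction t with
  | zero =>
      rw [hC0]
      simp only [sub_self]
      have : fnorm (0 : Matrix (Fin m) (Fin n) ℝ) = 0 := by
        simp [fnorm, frobSq]
      rw [this, hBK]
      positivity
  | succ t ih =>
      have hdecomp : gradf (W (t+1)) - C (t+1)
          = β • (gradf (W (t+1)) - gradf (W t)) + β • (gradf (W t) - C t) := by
        rw [hCrec t]; module
      have hb1 : fnorm (gradf (W (t+1)) - gradf (W t)) ≤ L * (η * (Real.sqrt (min m n : ℝ) * l ^ p)) := by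
        calc fnorm (gradf (W (t+1)) - gradf (W t)) ≤ L * fnorm (W (t+1) - W t) := hlip _ _
          _ ≤ L * (η * (Real.sqrt (min m n : ℝ) * l ^ p)) :=
              mul_le_mul_of_nonneg_left (hstep t) hL
      have hβabs : |β| = β := abs_of_pos hβ0
      calc fnorm (gradf (W (t+1)) - C (t+1))
          ≤ fnorm (β • (gradf (W (t+1)) - gradf (W t))) + fnorm (β • (gradf (W t) - C t)) := by
            rw [hdecomp]; exact fnorm_triangle _ _
        _ = β * fnorm (gradf (W (t+1)) - gradf (W t)) + β * fnorm (gradf (W t) - C t) := by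
            rw [fnorm_smul, fnorm_smul, hβabs]
        _ ≤ β * (L * (η * (Real.sqrt (min m n : ℝ) * l ^ p)))
            + β * (Real.sqrt (min m n : ℝ) * l ^ p * β * L * η / (1 - β)) := by
            gcongr
        _ = Real.sqrt (min m n : ℝ) * l ^ p * β * L * η / (1 - β) := by
            field_simp
            ring
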